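/- arXiv:1805.04998 — 6 statements merged into one kernel-verified Lean document; each statement's English description precedes it below -/
import Mathlib

section
/- Let (A, ∗, α) be a multiplicative Hom-superalgebra (not assumed Hom-associative). Define the supercommutator [x,y] := x∗y − (−1)^{|x||y|} y∗x and the ternary operation {x,y,z} := as_α(x,y,z). Then for all homogeneous x, y, z ∈ A the Hom-super Akivis identity holds: ↻_{(x,y,z)}(−1)^{|x||z|}[[x,y],α(z)] = ↻_{(x,y,z)}(−1)^{|x||z|}( {x,y,z} − (−1)^{|x||y|}{y,x,z} ), where ↻_{(x,y,z)}(−1)^{|x||z|}F(x,y,z) denotes the graded cyclic sum (−1)^{|x||z|}F(x,y,z) + (−1)^{|y||x|}F(y,z,x) + (−1)^{|z||y|}F(z,x,y). -/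
/-- A (multiplicative) Hom-superalgebra: a `ℤ/2`-graded `K`-vector space `L = L₀ ⊕ L₁`
with a parity-respecting bilinear operation `op` and an even multiplicative linear map `map`. -/
structure HomSuperalgebra (K : Type*) [Field K] (L : Type*) [AddCommGroup L] [Module K L] where
  grading : ZMod 2 → Submodule K L
  internal : DirectSum.IsInternal grading
  op : L →ₗ[K] L →ₗ[K] L
  op_mem : ∀ {i j : ZMod 2} {x y : L}, x ∈ grading i → y ∈ grading j → op x y ∈ grading (i + j)
  map : L →ₗ[K] L
  map_even : ∀ {i : ZMod 2} {x : L}, x ∈ grading i → map x ∈ grading i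
  map_op : ∀ x y : L, map (op x y) = op (map x) (map y)

namespace HomSuperalgebra

variable {K : Type*} [Field K] {L : Type*} [AddCommGroup L] [Module K L]

/-- The sign `(−1)^{ij}` attached to parities `i, j`. -/
def sgn (K : Type*) [Field K] (i j : ZMod 2) : K := (-1 : K) ^ (i.val * j.val)

/-- The supercommutator `[x,y] := x∗y − (−1)^{|x||y|} y∗x` of homogeneous elements
of parities `i` and `j`. -/
def br (A : HomSuperalgebra K L) (i j : ZMod 2) (x y : L) : L :=
  A.op x y - sgn K i j • A.op y x

/-- The Hom-associator `as_α(x,y,z) := (x∗y)∗α(z) − α(x)∗(y∗z)`. -/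
def assoc (A : HomSuperalgebra K L) (x y z : L) : L :=
  A.op (A.op x y) (A.map z) - A.op (A.map x) (A.op y z)

/-- The ternary operation `{x,y,z} := −(x∗y)∗α(z)`. -/
def trip (A : HomSuperalgebra K L) (x y z : L) : L :=
  -(A.op (A.op x y) (A.map z))

/-- The left Hom-Leibniz superidentity:
`α(x)∗(y∗z) = (x∗y)∗α(z) + (−1)^{|x||y|} α(y)∗(x∗z)` for homogeneous `x, y, z`. -/
def IsLeftLeibniz (A : HomSuperalgebra K L) : Prop :=
  ∀ (i j k : ZMod 2) (x y z : L),
    x ∈ A.grading i → y ∈ A.grading j → z ∈ A.grading k →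
      A.op (A.map x) (A.op y z)
        = A.op (A.op x y) (A.map z) + sgn K i j • A.op (A.map y) (A.op x z)

end HomSuperalgebra

open HomSuperalgebra

variable {K : Type*} [Field K] {L : Type*} [AddCommGroup L] [Module K L]

/-- the Hom-super Akivis identity for the supercommutator and Hom-associator of
any multiplicative (not necessarily Hom-associative) Hom-superalgebra. -/
theorem homSuperAkivis_identity (A : HomSuperalgebra K L)
    (i j k : ZMod 2) (x y z : L)
    (hx : x ∈ A.grading i) (hy : y ∈ A.grading j) (hz : z ∈ A.grading k) :
    sgn K i k • A.br (i + j) k (A.br i j x y) (A.map z)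
      + sgn K j i • A.br (j + k) i (A.br j k y z) (A.map x)
      + sgn K k j • A.br (k + i) j (A.br k i z x) (A.map y)
    = sgn K i k • (A.assoc x y z - sgn K i j • A.assoc y x z)
      + sgn K j i • (A.assoc y z x - sgn K j k • A.assoc z y x)
      + sgn K k j • (A.assoc z x y - sgn K k i • A.assoc x z y) := by
  fin_cases i <;> fin_cases j <;> fin_cases k <;>
    simp only [br, assoc, sgn, show ((⟨0, by decide⟩ : Fin (1 + 1)) : ZMod 2) = (0 : ZMod 2) from rfl, show ((⟨1, by decide⟩ : Fin (1 + 1)) : ZMod 2) = (1 : ZMod 2) from rfl, Fin.mk_zero, Fin.mk_one, CharTwo.add_self_eq_zero, ZMod.val_zero, ZMod.val_one, map_sub, map_smul, map_add, map_neg, LinearMap.neg_apply,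
      LinearMap.sub_apply, LinearMap.smul_apply, LinearMap.add_apply, pow_zero, pow_one,
      mul_zero, zero_mul, mul_one, one_mul, zero_add, add_zero, one_smul, neg_smul, neg_neg] <;>
    module
end

section
/- Let (L, ∗, α) be a left Hom-Leibniz superalgebra and define the supercommutator [x,y] := x∗y − (−1)^{|x||y|} y∗x. Then for all homogeneous x, y, z ∈ L: ↻_{(x,y,z)}(−1)^{|x||z|}[[x,y],α(z)] = ↻_{(x,y,z)}(−1)^{|x||z|}(x∗y)∗α(z), where ↻_{(x,y,z)}(−1)^{|x||z|}F(x,y,z) denotes the graded cyclic sum (−1)^{|x||z|}F(x,y,z) + (−1)^{|y||x|}F(y,z,x) + (−1)^{|z||y|}F(z,x,y). -/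
open HomSuperalgebra

variable {K : Type*} [Field K] {L : Type*} [AddCommGroup L] [Module K L]

/-- in a left Hom-Leibniz superalgebra the graded cyclic sum of
`[[x,y],α(z)]` equals the graded cyclic sum of `(x∗y)∗α(z)`. -/
theorem akivis_identity_of_leftLeibniz (A : HomSuperalgebra K L) (hL : A.IsLeftLeibniz)
    (i j k : ZMod 2) (x y z : L)
    (hx : x ∈ A.grading i) (hy : y ∈ A.grading j) (hz : z ∈ A.grading k) :
    sgn K i k • A.br (i + j) k (A.br i j x y) (A.map z)
      + sgn K j i • A.br (j + k) i (A.br j k y z) (A.map x)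
      + sgn K k j • A.br (k + i) j (A.br k i z x) (A.map y)
    = sgn K i k • A.op (A.op x y) (A.map z)
      + sgn K j i • A.op (A.op y z) (A.map x)
      + sgn K k j • A.op (A.op z x) (A.map y) := by
  have e4 := hL i k j x z y hx hz hy
  have e5 := hL j i k y x z hy hx hz
  have e6 := hL k j i z y x hz hy hx
  simp only [br, map_sub, map_smul, LinearMap.sub_apply, LinearMap.smul_apply] at *
  rw [e4, e5, e6]
  have h2 : ∀ a : ZMod 2, a = 0 ∨ a = 1 := by decide
  rcases h2 i with rfl | rfl <;> rcases h2 j with rfl | rfl <;> rcases h2 k with rfl | rfl <;>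
    simp only [sgn, Fin.mk_zero, Fin.mk_one, show (1 + 1 : ZMod 2) = 0 from rfl,
      add_zero, zero_add, ZMod.val_zero, ZMod.val_one, Nat.mul_zero, Nat.zero_mul,
      Nat.mul_one, Nat.one_mul, pow_zero, pow_one, one_smul, neg_smul] at * <;> module
end

section
/- Let (L, ∗, α) be a left Hom-Leibniz superalgebra, [x,y] := x∗y − (−1)^{|x||y|} y∗x the supercommutator, and {x,y,z} := −(x∗y)∗α(z). Then for all homogeneous x, y, z ∈ L: ↻_{(x,y,z)}(−1)^{|x||z|}( [[x,y],α(z)] + {x,y,z} ) = 0, where ↻_{(x,y,z)}(−1)^{|x||z|}F(x,y,z) denotes the graded cyclic sum (−1)^{|x||z|}F(x,y,z) + (−1)^{|y||x|}F(y,z,x) + (−1)^{|z||y|}F(z,x,y). -/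
open HomSuperalgebra

variable {K : Type*} [Field K] {L : Type*} [AddCommGroup L] [Module K L]

/-- SHLY5: in a left Hom-Leibniz superalgebra, the graded cyclic sum of
`[[x,y],α(z)] + {x,y,z}` vanishes, where `{x,y,z} := −(x∗y)∗α(z)`. -/
theorem shly5 (A : HomSuperalgebra K L) (hL : A.IsLeftLeibniz)
    (i j k : ZMod 2) (x y z : L)
    (hx : x ∈ A.grading i) (hy : y ∈ A.grading j) (hz : z ∈ A.grading k) :
    sgn K i k • (A.br (i + j) k (A.br i j x y) (A.map z) + A.trip x y z)
      + sgn K j i • (A.br (j + k) i (A.br j k y z) (A.map x) + A.trip y z x)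
      + sgn K k j • (A.br (k + i) j (A.br k i z x) (A.map y) + A.trip z x y) = 0 := by
  have h4 := hL j i k y x z hy hx hz
  have h5 := hL k j i z y x hz hy hx
  have h6 := hL i k j x z y hx hz hy
  clear hL hx hy hz
  simp only [br, trip, map_sub, map_smul, LinearMap.sub_apply, LinearMap.smul_apply] at *
  rcases (show ∀ a : ZMod 2, a = 0 ∨ a = 1 by decide) i with rfl | rfl <;> rcases (show ∀ a : ZMod 2, a = 0 ∨ a = 1 by decide) j with rfl | rfl <;> rcases (show ∀ a : ZMod 2, a = 0 ∨ a = 1 by decide) k with rfl | rfl <;>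
    norm_num [sgn, ZMod.val_one, show ZMod.val (2:ZMod 2) = 0 from rfl] at h4 h5 h6 ⊢ <;>
    first
    | linear_combination (norm := module) h4 + h5 + h6
    | linear_combination (norm := module) h4 - h5 - h6
    | linear_combination (norm := module) -h4 + h5 - h6
    | linear_combination (norm := module) -h4 - h5 + h6
end

section
/- Let (L, ∗, α) be a left Hom-Leibniz superalgebra and [x,y] := x∗y − (−1)^{|x||y|} y∗x the supercommutator. Then for all homogeneous u, x, y, z ∈ L: ↻_{(x,y,z)}(−1)^{|x||z|} ([x,y] ∗ α(z)) ∗ α²(u) = 0, where ↻_{(x,y,z)}(−1)^{|x||z|}F(x,y,z) denotes the graded cyclic sum (−1)^{|x||z|}F(x,y,z) + (−1)^{|y||x|}F(y,z,x) + (−1)^{|z||y|}F(z,x,y). (Equivalently, with the ternary operation {a,b,c} := −(a∗b)∗α(c), one has ↻_{(x,y,z)}(−1)^{|x||z|}{[x,y], α(z), α(u)} = 0.) -/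
open HomSuperalgebra

variable {K : Type*} [Field K] {L : Type*} [AddCommGroup L] [Module K L]

set_option maxHeartbeats 2000000 in
/-- SHLY6: in a left Hom-Leibniz superalgebra, the graded cyclic sum (in
`x, y, z`) of `([x,y] ∗ α(z)) ∗ α²(u)` vanishes. -/
theorem shly6 (A : HomSuperalgebra K L) (hL : A.IsLeftLeibniz)
    (i j k p : ZMod 2) (x y z u : L)
    (hx : x ∈ A.grading i) (hy : y ∈ A.grading j) (hz : z ∈ A.grading k)
    (hu : u ∈ A.grading p) :
    sgn K i k • A.op (A.op (A.br i j x y) (A.map z)) (A.map (A.map u))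
      + sgn K j i • A.op (A.op (A.br j k y z) (A.map x)) (A.map (A.map u))
      + sgn K k j • A.op (A.op (A.br k i z x) (A.map y)) (A.map (A.map u)) = 0 := by
  have Exyz := hL _ _ _ x y z hx hy hz
  have H1xyz := congrArg (fun t => A.op t (A.map (A.map u))) Exyz
  simp only [map_add, map_smul, LinearMap.add_apply, LinearMap.smul_apply] at H1xyz
  have H2xyz := hL _ _ _ (A.map x) (A.op y z) (A.map u) (A.map_even hx) (A.op_mem hy hz) (A.map_even hu)
  simp only [A.map_op] at H2xyz
  have H3xyz := hL _ _ _ (A.map x) (A.map y) (A.op z u) (A.map_even hx) (A.map_even hy) (A.op_mem hz hu)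
  simp only [A.map_op] at H3xyz
  have Eyzu := hL _ _ _ y z u hy hz hu
  have H6xyz := congrArg (fun t => A.op (A.map (A.map x)) t) Eyzu
  simp only [map_add, map_smul] at H6xyz
  have Exzy := hL _ _ _ x z y hx hz hy
  have H1xzy := congrArg (fun t => A.op t (A.map (A.map u))) Exzy
  simp only [map_add, map_smul, LinearMap.add_apply, LinearMap.smul_apply] at H1xzy
  have H2xzy := hL _ _ _ (A.map x) (A.op z y) (A.map u) (A.map_even hx) (A.op_mem hz hy) (A.map_even hu)
  simp only [A.map_op] at H2xzy
  have H3xzy := hL _ _ _ (A.map x) (A.map z) (A.op y u) (A.map_even hx) (A.map_even hz) (A.op_mem hy hu)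
  simp only [A.map_op] at H3xzy
  have Ezyu := hL _ _ _ z y u hz hy hu
  have H6xzy := congrArg (fun t => A.op (A.map (A.map x)) t) Ezyu
  simp only [map_add, map_smul] at H6xzy
  have Eyxz := hL _ _ _ y x z hy hx hz
  have H1yxz := congrArg (fun t => A.op t (A.map (A.map u))) Eyxz
  simp only [map_add, map_smul, LinearMap.add_apply, LinearMap.smul_apply] at H1yxz
  have H2yxz := hL _ _ _ (A.map y) (A.op x z) (A.map u) (A.map_even hy) (A.op_mem hx hz) (A.map_even hu)
  simp only [A.map_op] at H2yxz
  have H3yxz := hL _ _ _ (A.map y) (A.map x) (A.op z u) (A.map_even hy) (A.map_even hx) (A.op_mem hz hu)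
  simp only [A.map_op] at H3yxz
  have Exzu := hL _ _ _ x z u hx hz hu
  have H6yxz := congrArg (fun t => A.op (A.map (A.map y)) t) Exzu
  simp only [map_add, map_smul] at H6yxz
  have Eyzx := hL _ _ _ y z x hy hz hx
  have H1yzx := congrArg (fun t => A.op t (A.map (A.map u))) Eyzx
  simp only [map_add, map_smul, LinearMap.add_apply, LinearMap.smul_apply] at H1yzx
  have H2yzx := hL _ _ _ (A.map y) (A.op z x) (A.map u) (A.map_even hy) (A.op_mem hz hx) (A.map_even hu)
  simp only [A.map_op] at H2yzx
  have H3yzx := hL _ _ _ (A.map y) (A.map z) (A.op x u) (A.map_even hy) (A.map_even hz) (A.op_mem hx hu)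
  simp only [A.map_op] at H3yzx
  have Ezxu := hL _ _ _ z x u hz hx hu
  have H6yzx := congrArg (fun t => A.op (A.map (A.map y)) t) Ezxu
  simp only [map_add, map_smul] at H6yzx
  have Ezxy := hL _ _ _ z x y hz hx hy
  have H1zxy := congrArg (fun t => A.op t (A.map (A.map u))) Ezxy
  simp only [map_add, map_smul, LinearMap.add_apply, LinearMap.smul_apply] at H1zxy
  have H2zxy := hL _ _ _ (A.map z) (A.op x y) (A.map u) (A.map_even hz) (A.op_mem hx hy) (A.map_even hu)
  simp only [A.map_op] at H2zxy
  have H3zxy := hL _ _ _ (A.map z) (A.map x) (A.op y u) (A.map_even hz) (A.map_even hx) (A.op_mem hy hu)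
  simp only [A.map_op] at H3zxy
  have Exyu := hL _ _ _ x y u hx hy hu
  have H6zxy := congrArg (fun t => A.op (A.map (A.map z)) t) Exyu
  simp only [map_add, map_smul] at H6zxy
  have Ezyx := hL _ _ _ z y x hz hy hx
  have H1zyx := congrArg (fun t => A.op t (A.map (A.map u))) Ezyx
  simp only [map_add, map_smul, LinearMap.add_apply, LinearMap.smul_apply] at H1zyx
  have H2zyx := hL _ _ _ (A.map z) (A.op y x) (A.map u) (A.map_even hz) (A.op_mem hy hx) (A.map_even hu)
  simp only [A.map_op] at H2zyx
  have H3zyx := hL _ _ _ (A.map z) (A.map y) (A.op x u) (A.map_even hz) (A.map_even hy) (A.op_mem hx hu)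
  simp only [A.map_op] at H3zyx
  have Eyxu := hL _ _ _ y x u hy hx hu
  have H6zyx := congrArg (fun t => A.op (A.map (A.map z)) t) Eyxu
  simp only [map_add, map_smul] at H6zyx
  simp only [HomSuperalgebra.br, map_sub, map_smul, LinearMap.sub_apply, LinearMap.smul_apply]
  have hcase : ∀ m : ZMod 2, m = 0 ∨ m = 1 := by decide
  rcases hcase i with rfl|rfl <;> rcases hcase j with rfl|rfl <;> rcases hcase k with rfl|rfl <;>
    norm_num [HomSuperalgebra.sgn, ZMod.val_one, show ZMod.val (2 : ZMod 2) = 0 from rfl] at H1xyz H2xyz H3xyz H6xyz H1xzy H2xzy H3xzy H6xzy H1yxz H2yxz H3yxz H6yxz H1yzx H2yzx H3yzx H6yzx H1zxy H2zxy H3zxy H6zxy H1zyx H2zyx H3zyx H6zyx ⊢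
  · linear_combination (norm := module) (-1 : K) • H1xyz + (1 : K) • H1xzy + (1 : K) • H1yxz + (-1 : K) • H1yzx + (-1 : K) • H1zxy + (1 : K) • H1zyx + (-2 : K) • H2xyz + (2 : K) • H2xzy + (2 : K) • H2yxz + (-2 : K) • H2yzx + (-2 : K) • H2zxy + (2 : K) • H2zyx + (2 : K) • H3xyz + (-2 : K) • H3xzy + (-2 : K) • H3yxz + (2 : K) • H3yzx + (2 : K) • H3zxy + (-2 : K) • H3zyx + (-2 : K) • H6xyz + (2 : K) • H6xzy + (2 : K) • H6yxz + (-2 : K) • H6yzx + (-2 : K) • H6zxy + (2 : K) • H6zyx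
  · linear_combination (norm := module) (-1 : K) • H1xyz + (1 : K) • H1xzy + (1 : K) • H1yxz + (-1 : K) • H1yzx + (-1 : K) • H1zxy + (1 : K) • H1zyx + (-2 : K) • H2xyz + (2 : K) • H2xzy + (2 : K) • H2yxz + (-2 : K) • H2yzx + (-2 : K) • H2zxy + (2 : K) • H2zyx + (2 : K) • H3xyz + (-2 : K) • H3xzy + (-2 : K) • H3yxz + (2 : K) • H3yzx + (2 : K) • H3zxy + (-2 : K) • H3zyx + (-2 : K) • H6xyz + (2 : K) • H6xzy + (2 : K) • H6yxz + (-2 : K) • H6yzx + (-2 : K) • H6zxy + (2 : K) • H6zyx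
  · linear_combination (norm := module) (-1 : K) • H1xyz + (1 : K) • H1xzy + (1 : K) • H1yxz + (-1 : K) • H1yzx + (-1 : K) • H1zxy + (1 : K) • H1zyx + (-2 : K) • H2xyz + (2 : K) • H2xzy + (2 : K) • H2yxz + (-2 : K) • H2yzx + (-2 : K) • H2zxy + (2 : K) • H2zyx + (2 : K) • H3xyz + (-2 : K) • H3xzy + (-2 : K) • H3yxz + (2 : K) • H3yzx + (2 : K) • H3zxy + (-2 : K) • H3zyx + (-2 : K) • H6xyz + (2 : K) • H6xzy + (2 : K) • H6yxz + (-2 : K) • H6yzx + (-2 : K) • H6zxy + (2 : K) • H6zyx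
  · linear_combination (norm := module) (-1 : K) • H1xyz + (-1 : K) • H1xzy + (1 : K) • H1yxz + (-1 : K) • H1yzx + (1 : K) • H1zxy + (-1 : K) • H1zyx + (-2 : K) • H2xyz + (-2 : K) • H2xzy + (2 : K) • H2yxz + (-2 : K) • H2yzx + (2 : K) • H2zxy + (-2 : K) • H2zyx + (2 : K) • H3xyz + (2 : K) • H3xzy + (-2 : K) • H3yxz + (2 : K) • H3yzx + (-2 : K) • H3zxy + (2 : K) • H3zyx + (-2 : K) • H6xyz + (-2 : K) • H6xzy + (2 : K) • H6yxz + (-2 : K) • H6yzx + (2 : K) • H6zxy + (-2 : K) • H6zyx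
  · linear_combination (norm := module) (-1 : K) • H1xyz + (1 : K) • H1xzy + (1 : K) • H1yxz + (-1 : K) • H1yzx + (-1 : K) • H1zxy + (1 : K) • H1zyx + (-2 : K) • H2xyz + (2 : K) • H2xzy + (2 : K) • H2yxz + (-2 : K) • H2yzx + (-2 : K) • H2zxy + (2 : K) • H2zyx + (2 : K) • H3xyz + (-2 : K) • H3xzy + (-2 : K) • H3yxz + (2 : K) • H3yzx + (2 : K) • H3zxy + (-2 : K) • H3zyx + (-2 : K) • H6xyz + (2 : K) • H6xzy + (2 : K) • H6yxz + (-2 : K) • H6yzx + (-2 : K) • H6zxy + (2 : K) • H6zyx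
  · linear_combination (norm := module) (1 : K) • H1xyz + (-1 : K) • H1xzy + (-1 : K) • H1yxz + (-1 : K) • H1yzx + (-1 : K) • H1zxy + (1 : K) • H1zyx + (2 : K) • H2xyz + (-2 : K) • H2xzy + (-2 : K) • H2yxz + (-2 : K) • H2yzx + (-2 : K) • H2zxy + (2 : K) • H2zyx + (-2 : K) • H3xyz + (2 : K) • H3xzy + (2 : K) • H3yxz + (2 : K) • H3yzx + (2 : K) • H3zxy + (-2 : K) • H3zyx + (2 : K) • H6xyz + (-2 : K) • H6xzy + (-2 : K) • H6yxz + (-2 : K) • H6yzx + (-2 : K) • H6zxy + (2 : K) • H6zyx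
  · linear_combination (norm := module) (-1 : K) • H1xyz + (1 : K) • H1xzy + (-1 : K) • H1yxz + (1 : K) • H1yzx + (-1 : K) • H1zxy + (-1 : K) • H1zyx + (-2 : K) • H2xyz + (2 : K) • H2xzy + (-2 : K) • H2yxz + (2 : K) • H2yzx + (-2 : K) • H2zxy + (-2 : K) • H2zyx + (2 : K) • H3xyz + (-2 : K) • H3xzy + (2 : K) • H3yxz + (-2 : K) • H3yzx + (2 : K) • H3zxy + (2 : K) • H3zyx + (-2 : K) • H6xyz + (2 : K) • H6xzy + (-2 : K) • H6yxz + (2 : K) • H6yzx + (-2 : K) • H6zxy + (-2 : K) • H6zyx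
  · linear_combination (norm := module) (1 : K) • H1xyz + (1 : K) • H1xzy + (1 : K) • H1yxz + (1 : K) • H1yzx + (1 : K) • H1zxy + (1 : K) • H1zyx + (2 : K) • H2xyz + (2 : K) • H2xzy + (2 : K) • H2yxz + (2 : K) • H2yzx + (2 : K) • H2zxy + (2 : K) • H2zyx + (-2 : K) • H3xyz + (-2 : K) • H3xzy + (-2 : K) • H3yxz + (-2 : K) • H3yzx + (-2 : K) • H3zxy + (-2 : K) • H3zyx + (2 : K) • H6xyz + (2 : K) • H6xzy + (2 : K) • H6yxz + (2 : K) • H6yzx + (2 : K) • H6zxy + (2 : K) • H6zyx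
end

section
/- Let (L, ∗, α) be a left Hom-Leibniz superalgebra, [x,y] := x∗y − (−1)^{|x||y|} y∗x the supercommutator, and {a,b,c} := −(a∗b)∗α(c). Then for all homogeneous u, v, x, y ∈ L: {α(x), α(y), [u,v]} = [{x,y,u}, α²(v)] + (−1)^{|u|(|x|+|y|)} [α²(u), {x,y,v}]. -/
open HomSuperalgebra

variable {K : Type*} [Field K] {L : Type*} [AddCommGroup L] [Module K L]

/-- SHLY7: in a left Hom-Leibniz superalgebra, with `{a,b,c} := −(a∗b)∗α(c)`,
`{α(x), α(y), [u,v]} = [{x,y,u}, α²(v)] + (−1)^{|u|(|x|+|y|)} [α²(u), {x,y,v}]`. -/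
theorem shly7 (A : HomSuperalgebra K L) (hL : A.IsLeftLeibniz)
    (i j p q : ZMod 2) (x y u v : L)
    (hx : x ∈ A.grading i) (hy : y ∈ A.grading j)
    (hu : u ∈ A.grading p) (hv : v ∈ A.grading q) :
    A.trip (A.map x) (A.map y) (A.br p q u v)
      = A.br (i + j + p) q (A.trip x y u) (A.map (A.map v))
        + ((-1 : K) ^ (p.val * (i.val + j.val))) •
            A.br p (i + j + q) (A.map (A.map u)) (A.trip x y v) := by
  have hw : A.op x y ∈ A.grading (i + j) := A.op_mem hx hy
  have h1 := hL (i + j) p q (A.op x y) (A.map u) (A.map v) hw (A.map_even hu) (A.map_even hv)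
  have h2 := hL (i + j) q p (A.op x y) (A.map v) (A.map u) hw (A.map_even hv) (A.map_even hu)
  simp only [trip, br, sgn, A.map_op, map_sub, map_smul, LinearMap.sub_apply,
    LinearMap.smul_apply, map_neg, LinearMap.neg_apply] at h1 h2 ⊢
  rw [h1, h2]
  have h01 : ∀ a : ZMod 2, a = 0 ∨ a = 1 := by decide
  rcases h01 i with rfl | rfl <;> rcases h01 j with rfl | rfl <;> rcases h01 p with rfl | rfl <;> rcases h01 q with rfl | rfl
  all_goals
    norm_num [ZMod.val_add, ZMod.val_one, ZMod.val_zero, Nat.mod_self,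
      show ZMod.val (2 : ZMod 2) = 0 from rfl, show ZMod.val (3 : ZMod 2) = 1 from rfl] at h1 h2 ⊢
  all_goals module
end

section
/- Let (L, ∗, α) be a left Hom-Leibniz superalgebra and {a,b,c} := −(a∗b)∗α(c). Then for all homogeneous u, v, w, x, y ∈ L: {α²(x), α²(y), {u,v,w}} = {{x,y,u}, α²(v), α²(w)} + (−1)^{|u|(|x|+|y|)} {α²(u), {x,y,v}, α²(w)} + (−1)^{(|x|+|y|)(|u|+|v|)} {α²(u), α²(v), {x,y,w}}. -/
open HomSuperalgebra

variable {K : Type*} [Field K] {L : Type*} [AddCommGroup L] [Module K L]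

/-- SHLY8: in a left Hom-Leibniz superalgebra, with `{a,b,c} := −(a∗b)∗α(c)`,
the ternary operation satisfies the Hom-super-Nambu-type derivation identity. -/
theorem shly8 (A : HomSuperalgebra K L) (hL : A.IsLeftLeibniz)
    (i j p q r : ZMod 2) (x y u v w : L)
    (hx : x ∈ A.grading i) (hy : y ∈ A.grading j)
    (hu : u ∈ A.grading p) (hv : v ∈ A.grading q) (hw : w ∈ A.grading r) :
    A.trip (A.map (A.map x)) (A.map (A.map y)) (A.trip u v w)
      = A.trip (A.trip x y u) (A.map (A.map v)) (A.map (A.map w))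
        + ((-1 : K) ^ (p.val * (i.val + j.val))) •
            A.trip (A.map (A.map u)) (A.trip x y v) (A.map (A.map w))
        + ((-1 : K) ^ ((i.val + j.val) * (p.val + q.val))) •
            A.trip (A.map (A.map u)) (A.map (A.map v)) (A.trip x y w) := by

  have e1 : ∀ k : ℕ, (-1:K)^k = (-1)^(k % 2) := fun k => by
    conv_lhs => rw [← Nat.div_add_mod k 2]
    rw [pow_add, pow_mul, neg_one_sq, one_pow, one_mul]
  have epow : ∀ m n : ℕ, m % 2 = n % 2 → (-1:K)^m = (-1)^n := fun m n h => by
    rw [e1 m, e1 n, h]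
  have s1 : sgn K (i + j) p = (-1:K) ^ (p.val * (i.val + j.val)) := by
    unfold sgn
    apply epow
    conv_rhs => rw [Nat.mul_comm, Nat.mul_mod]
    conv_lhs => rw [Nat.mul_mod]
    rw [ZMod.val_add]
    simp [Nat.mod_mod]
  have s2 : sgn K (i + j) (p + q) = (-1:K) ^ ((i.val + j.val) * (p.val + q.val)) := by
    unfold sgn
    apply epow
    conv_rhs => rw [Nat.mul_mod]
    conv_lhs => rw [Nat.mul_mod]
    rw [ZMod.val_add, ZMod.val_add]
    simp [Nat.mod_mod]
  have ha : A.op x y ∈ A.grading (i + j) := A.op_mem hx hy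
  have h1 := hL (i + j) (p + q) r (A.map (A.op x y))
      (A.op (A.map u) (A.map v)) (A.map (A.map w))
      (A.map_even ha) (A.op_mem (A.map_even hu) (A.map_even hv))
      (A.map_even (A.map_even hw))
  have h2 := hL (i + j) p q (A.op x y) (A.map u) (A.map v) ha (A.map_even hu) (A.map_even hv)
  simp only [trip, map_op, map_neg, LinearMap.map_neg, LinearMap.neg_apply, neg_neg,
    map_smul, LinearMap.smul_apply, smul_neg, s1, s2] at h1 h2 ⊢
  rw [h1, h2]
  simp only [map_add, LinearMap.add_apply, map_smul, LinearMap.smul_apply, smul_add]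
end
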